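/- Let a, b ≥ 1 and let A, B be disjoint finite sets with |A| = a, |B| = b. A coloring c: A ⊔ B → {R, G, W, K} (red, green, white, black) is good if the number of red elements of A equals the number of green elements of B and the number of green elements of A equals the number of red elements of B. Then Σ_{good c} t^{g(c)+w(c)} = Σ_{i=0}^{a} Σ_{j=0}^{b} C(a,i)·C(b,j)·C(a-i+j,j)·C(b+i-j,i)·t^{i+j}, where g(c), w(c) denote the numbers of green and white elements under c. -/

import Mathlib

open Polynomial Finset

/-- Four colors: red, green, white, black. -/
inductive Col
  | R | G | W | K
deriving DecidableEq

instance : Fintype Col :=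
  ⟨{Col.R, Col.G, Col.W, Col.K}, fun x => by cases x <;> simp⟩

/-- A coloring of `A ⊕ B` is good if the number of red elements of `A` equals the number of
green elements of `B` and the number of green elements of `A` equals the number of red
elements of `B`. -/
def IsGood {A B : Type} [Fintype A] [Fintype B] (c : A ⊕ B → Col) : Prop :=
  (Finset.univ.filter (fun x : A => c (Sum.inl x) = Col.R)).card
      = (Finset.univ.filter (fun y : B => c (Sum.inr y) = Col.G)).card ∧
  (Finset.univ.filter (fun x : A => c (Sum.inl x) = Col.G)).card
      = (Finset.univ.filter (fun y : B => c (Sum.inr y) = Col.R)).card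

instance {A B : Type} [Fintype A] [Fintype B] (c : A ⊕ B → Col) :
    Decidable (IsGood c) := by unfold IsGood; infer_instance

/-! ### Auxiliary lemmas -/

/-- A version of Vandermonde's identity. -/
lemma vdm_aux (m n N : ℕ) (h : m ≤ N) :
    ∑ k ∈ Finset.range (N + 1), m.choose k * n.choose k = (m + n).choose m := by
  have h1 : ∑ k ∈ Finset.range (N + 1), m.choose k * n.choose k
      = ∑ k ∈ Finset.range (m + 1), m.choose k * n.choose k := by
    rw [← Finset.sum_subset (s₁ := Finset.range (m + 1))]
    · intro x hx; rw [Finset.mem_range] at *; omega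
    · intro x _ hx'
      rw [Finset.mem_range] at hx'
      rw [Nat.choose_eq_zero_of_lt (by omega), Nat.zero_mul]
  rw [h1]
  have h2 : ∑ k ∈ Finset.range (m + 1), m.choose k * n.choose k
      = ∑ k ∈ Finset.range (m + 1), n.choose k * m.choose (m - k) := by
    refine Finset.sum_congr rfl fun k hk => ?_
    rw [Finset.mem_range] at hk
    rw [← Nat.choose_symm (by omega : k ≤ m), Nat.mul_comm]
  rw [h2, ← Finset.Nat.sum_antidiagonal_eq_sum_range_succ
      (fun p q => n.choose p * m.choose q), ← Nat.add_choose_eq, Nat.add_comm n m]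

lemma gw_card {A : Type} [Fintype A] [DecidableEq A] (f : A → Col) :
    (univ.filter fun x => f x = Col.G ∨ f x = Col.W).card
      = (univ.filter fun x => f x = Col.G).card + (univ.filter fun x => f x = Col.W).card := by
  have hd : Disjoint (univ.filter fun x => f x = Col.G) (univ.filter fun x => f x = Col.W) := by
    rw [Finset.disjoint_left]
    intro x hx hy
    simp only [Finset.mem_filter] at hx hy
    rw [hx.2] at hy
    exact absurd hy.2 (by decide)
  rw [Finset.filter_or, Finset.card_union_of_disjoint hd]

/-- Reconstruction of a coloring from the triple (G∪W set, G set, R set). -/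
def recon {A : Type} [DecidableEq A] (p : Σ _ : Finset A, Finset A × Finset A) : A → Col :=
  fun x => if x ∈ p.2.1 then Col.G else if x ∈ p.1 then Col.W
    else if x ∈ p.2.2 then Col.R else Col.K

lemma recon_filter_G {A : Type} [Fintype A] [DecidableEq A]
    (p : Σ _ : Finset A, Finset A × Finset A) :
    (univ.filter fun x => recon p x = Col.G) = p.2.1 := by
  ext x
  simp only [Finset.mem_filter, Finset.mem_univ, true_and]
  simp only [recon]
  split_ifs with h1 h2 h3
  · exact iff_of_true rfl h1
  · exact iff_of_false (by decide) h1
  · exact iff_of_false (by decide) h1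
  · exact iff_of_false (by decide) h1

lemma recon_filter_GW {A : Type} [Fintype A] [DecidableEq A]
    (p : Σ _ : Finset A, Finset A × Finset A) (h : p.2.1 ⊆ p.1) :
    (univ.filter fun x => recon p x = Col.G ∨ recon p x = Col.W) = p.1 := by
  ext x
  simp only [Finset.mem_filter, Finset.mem_univ, true_and]
  simp only [recon]
  split_ifs with h1 h2 h3
  · exact iff_of_true (Or.inl rfl) (h h1)
  · exact iff_of_true (Or.inr rfl) h2
  · exact iff_of_false (by decide) h2
  · exact iff_of_false (by decide) h2

lemma recon_filter_R {A : Type} [Fintype A] [DecidableEq A]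
    (p : Σ _ : Finset A, Finset A × Finset A) (hG : p.2.1 ⊆ p.1) (hR : p.2.2 ⊆ p.1ᶜ) :
    (univ.filter fun x => recon p x = Col.R) = p.2.2 := by
  ext x
  simp only [Finset.mem_filter, Finset.mem_univ, true_and]
  simp only [recon]
  split_ifs with h1 h2 h3
  · exact iff_of_false (by decide) (fun hx => (Finset.mem_compl.mp (hR hx)) (hG h1))
  · exact iff_of_false (by decide) (fun hx => (Finset.mem_compl.mp (hR hx)) h2)
  · exact iff_of_true rfl h3
  · exact iff_of_false (by decide) h3

lemma recon_eq {A : Type} [Fintype A] [DecidableEq A] (f : A → Col) :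
    recon ⟨univ.filter fun x => f x = Col.G ∨ f x = Col.W,
      (univ.filter fun x => f x = Col.G, univ.filter fun x => f x = Col.R)⟩ = f := by
  funext x
  simp only [recon, Finset.mem_filter, Finset.mem_univ, true_and]
  cases h : f x <;> simp [h]

/-- Counting colorings of a single finite type with prescribed color counts. -/
lemma count_one {A : Type} [Fintype A] [DecidableEq A] (i s r : ℕ) :
    (univ.filter (fun f : A → Col =>
      (univ.filter fun x => f x = Col.G).card + (univ.filter fun x => f x = Col.W).card = i ∧
      (univ.filter fun x => f x = Col.G).card = s ∧
      (univ.filter fun x => f x = Col.R).card = r)).card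
    = (Fintype.card A).choose i * (i.choose s * ((Fintype.card A) - i).choose r) := by
  classical
  have hbij : (univ.filter (fun f : A → Col =>
      (univ.filter fun x => f x = Col.G).card + (univ.filter fun x => f x = Col.W).card = i ∧
      (univ.filter fun x => f x = Col.G).card = s ∧
      (univ.filter fun x => f x = Col.R).card = r)).card
      = ((((univ : Finset A)).powersetCard i).sigma (fun S => S.powersetCard s ×ˢ Sᶜ.powersetCard r)).card := by
    apply Finset.card_nbij'
      (fun f => ⟨univ.filter fun x => f x = Col.G ∨ f x = Col.W,
        (univ.filter fun x => f x = Col.G, univ.filter fun x => f x = Col.R)⟩)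
      recon
    · intro f hf
      simp only [Finset.mem_coe, Finset.mem_filter, Finset.mem_univ, true_and] at hf
      obtain ⟨h1, h2, h3⟩ := hf
      simp only [Finset.mem_coe, Finset.mem_sigma, Finset.mem_product, Finset.mem_powersetCard]
      refine ⟨⟨Finset.subset_univ _, by rw [gw_card]; omega⟩, ⟨?_, h2⟩, ⟨?_, h3⟩⟩
      · intro x hx
        simp only [Finset.mem_filter] at *
        exact ⟨hx.1, Or.inl hx.2⟩
      · intro x hx
        simp only [Finset.mem_filter, Finset.mem_univ, true_and] at hx
        simp [Finset.mem_compl, Finset.mem_filter, hx]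
    · rintro ⟨S, G2, R2⟩ hp
      simp only [Finset.mem_coe, Finset.mem_sigma, Finset.mem_product, Finset.mem_powersetCard] at hp
      obtain ⟨⟨-, hS⟩, ⟨hGsub, hG⟩, ⟨hRsub, hR⟩⟩ := hp
      simp only [Finset.mem_coe, Finset.mem_filter, Finset.mem_univ, true_and]
      refine ⟨?_, ?_, ?_⟩
      · rw [← gw_card, recon_filter_GW _ hGsub]
        exact hS
      · rw [recon_filter_G]
        exact hG
      · rw [recon_filter_R _ hGsub hRsub]
        exact hR
    · intro f _
      exact recon_eq f
    · rintro ⟨S, G2, R2⟩ hp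
      simp only [Finset.mem_coe, Finset.mem_sigma, Finset.mem_product, Finset.mem_powersetCard] at hp
      obtain ⟨⟨-, hS⟩, ⟨hGsub, hG⟩, ⟨hRsub, hR⟩⟩ := hp
      beta_reduce
      rw [recon_filter_GW (p := ⟨S, G2, R2⟩) hGsub, recon_filter_G, recon_filter_R (p := ⟨S, G2, R2⟩) hGsub hRsub]
  rw [hbij, Finset.card_sigma]
  have hconst : ∀ S ∈ (univ : Finset A).powersetCard i, (S.powersetCard s ×ˢ Sᶜ.powersetCard r).card
      = i.choose s * ((Fintype.card A) - i).choose r := by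
    intro S hS
    rw [Finset.mem_powersetCard] at hS
    rw [Finset.card_product, Finset.card_powersetCard, Finset.card_powersetCard, hS.2,
      Finset.card_compl, hS.2]
  rw [Finset.sum_congr rfl hconst, Finset.sum_const, Finset.card_powersetCard,
    Finset.card_univ, smul_eq_mul]

/-- Counting colorings of a sum type with prescribed color counts on both summands. -/
lemma count_pair {A B : Type} [Fintype A] [Fintype B] [DecidableEq A] [DecidableEq B]
    (i j r s : ℕ) :
    (univ.filter (fun c : A ⊕ B → Col =>
      ((univ.filter fun x : A => c (Sum.inl x) = Col.G).card
          + (univ.filter fun x : A => c (Sum.inl x) = Col.W).card = i ∧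
        (univ.filter fun x : A => c (Sum.inl x) = Col.G).card = s ∧
        (univ.filter fun x : A => c (Sum.inl x) = Col.R).card = r) ∧
      ((univ.filter fun y : B => c (Sum.inr y) = Col.G).card
          + (univ.filter fun y : B => c (Sum.inr y) = Col.W).card = j ∧
        (univ.filter fun y : B => c (Sum.inr y) = Col.G).card = r ∧
        (univ.filter fun y : B => c (Sum.inr y) = Col.R).card = s))).card
    = ((Fintype.card A).choose i * (i.choose s * ((Fintype.card A) - i).choose r))
      * ((Fintype.card B).choose j * (j.choose r * ((Fintype.card B) - j).choose s)) := by
  classical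
  rw [← count_one (A := A) i s r, ← count_one (A := B) j r s, ← Finset.card_product]
  apply Finset.card_nbij' (fun c => (fun x => c (Sum.inl x), fun y => c (Sum.inr y)))
    (fun p => Sum.elim p.1 p.2)
  · intro c hc
    simp only [Finset.mem_coe, Finset.mem_filter, Finset.mem_univ, true_and, Finset.mem_product] at *
    exact hc
  · intro p hp
    simp only [Finset.mem_coe, Finset.mem_filter, Finset.mem_univ, true_and, Finset.mem_product,
      Sum.elim_inl, Sum.elim_inr] at *
    exact hp
  · intro c _
    funext z
    cases z <;> rfl
  · intro p _
    rfl

lemma card_filter_sumtype {A B : Type} [Fintype A] [Fintype B] (p : A ⊕ B → Prop)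
    [DecidablePred p] :
    (univ.filter p).card
      = (univ.filter fun x : A => p (Sum.inl x)).card
        + (univ.filter fun y : B => p (Sum.inr y)).card := by
  classical
  rw [Finset.card_filter, Finset.card_filter, Finset.card_filter,
    ← Finset.univ_disjSum_univ, Finset.sum_disjSum]

theorem stmt_9 (a b : ℕ) (ha : 1 ≤ a) (hb : 1 ≤ b)
    (A B : Type) [Fintype A] [Fintype B] [DecidableEq A] [DecidableEq B]
    (hA : Fintype.card A = a) (hB : Fintype.card B = b) :
    ∑ c ∈ Finset.univ.filter (fun c : A ⊕ B → Col => IsGood c),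
        (X : Polynomial ℤ) ^ ((Finset.univ.filter (fun z : A ⊕ B => c z = Col.G)).card
          + (Finset.univ.filter (fun z : A ⊕ B => c z = Col.W)).card)
      = ∑ i ∈ Finset.range (a + 1), ∑ j ∈ Finset.range (b + 1),
          C ((a.choose i * b.choose j * (a - i + j).choose j * (b + i - j).choose i : ℕ) : ℤ)
            * X ^ (i + j) := by
  classical
  set key : (A ⊕ B → Col) → ℕ × ℕ × ℕ × ℕ := fun c =>
    ((univ.filter fun x : A => c (Sum.inl x) = Col.G).card
       + (univ.filter fun x : A => c (Sum.inl x) = Col.W).card,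
     (univ.filter fun y : B => c (Sum.inr y) = Col.G).card
       + (univ.filter fun y : B => c (Sum.inr y) = Col.W).card,
     (univ.filter fun x : A => c (Sum.inl x) = Col.R).card,
     (univ.filter fun x : A => c (Sum.inl x) = Col.G).card) with hkey
  set R4 : Finset (ℕ × ℕ × ℕ × ℕ) :=
    Finset.range (a + 1) ×ˢ Finset.range (b + 1) ×ˢ Finset.range (a + 1) ×ˢ Finset.range (a + 1)
    with hR4
  have hmaps : ∀ c ∈ univ.filter (fun c : A ⊕ B → Col => IsGood c), key c ∈ R4 := by
    intro c _
    have h1 : (univ.filter fun x : A => c (Sum.inl x) = Col.G).card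
        + (univ.filter fun x : A => c (Sum.inl x) = Col.W).card ≤ a := by
      rw [← gw_card]
      calc (univ.filter fun x : A => c (Sum.inl x) = Col.G ∨ c (Sum.inl x) = Col.W).card
          ≤ (univ : Finset A).card := Finset.card_filter_le _ _
        _ = a := by rw [Finset.card_univ, hA]
    have h2 : (univ.filter fun y : B => c (Sum.inr y) = Col.G).card
        + (univ.filter fun y : B => c (Sum.inr y) = Col.W).card ≤ b := by
      rw [← gw_card]
      calc (univ.filter fun y : B => c (Sum.inr y) = Col.G ∨ c (Sum.inr y) = Col.W).card
          ≤ (univ : Finset B).card := Finset.card_filter_le _ _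
        _ = b := by rw [Finset.card_univ, hB]
    have h3 : (univ.filter fun x : A => c (Sum.inl x) = Col.R).card ≤ a := by
      calc (univ.filter fun x : A => c (Sum.inl x) = Col.R).card
          ≤ (univ : Finset A).card := Finset.card_filter_le _ _
        _ = a := by rw [Finset.card_univ, hA]
    have h4 : (univ.filter fun x : A => c (Sum.inl x) = Col.G).card ≤ a := by
      calc (univ.filter fun x : A => c (Sum.inl x) = Col.G).card
          ≤ (univ : Finset A).card := Finset.card_filter_le _ _
        _ = a := by rw [Finset.card_univ, hA]
    simp only [hkey, hR4, Finset.mem_product, Finset.mem_range]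
    exact ⟨by omega, by omega, by omega, by omega⟩
  calc ∑ c ∈ Finset.univ.filter (fun c : A ⊕ B → Col => IsGood c),
        (X : Polynomial ℤ) ^ ((Finset.univ.filter (fun z : A ⊕ B => c z = Col.G)).card
          + (Finset.univ.filter (fun z : A ⊕ B => c z = Col.W)).card)
      = ∑ c ∈ Finset.univ.filter (fun c : A ⊕ B → Col => IsGood c),
          (X : Polynomial ℤ) ^ ((key c).1 + (key c).2.1) := by
        refine Finset.sum_congr rfl fun c _ => ?_
        congr 1
        rw [card_filter_sumtype (fun z => c z = Col.G), card_filter_sumtype (fun z => c z = Col.W)]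
        simp only [hkey]
        ring
    _ = ∑ v ∈ R4, ∑ c ∈ (Finset.univ.filter (fun c : A ⊕ B → Col => IsGood c)).filter
          (fun c => key c = v), (X : Polynomial ℤ) ^ ((key c).1 + (key c).2.1) :=
        (Finset.sum_fiberwise_of_maps_to hmaps _).symm
    _ = ∑ v ∈ R4, ((Finset.univ.filter (fun c : A ⊕ B → Col => IsGood c)).filter
          (fun c => key c = v)).card • (X : Polynomial ℤ) ^ (v.1 + v.2.1) := by
        refine Finset.sum_congr rfl fun v _ => ?_
        rw [← Finset.sum_const]
        refine Finset.sum_congr rfl fun c hc => ?_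
        rw [(Finset.mem_filter.mp hc).2]
    _ = ∑ i ∈ Finset.range (a + 1), ∑ j ∈ Finset.range (b + 1), ∑ r ∈ Finset.range (a + 1),
          ∑ s ∈ Finset.range (a + 1),
          ((Finset.univ.filter (fun c : A ⊕ B → Col => IsGood c)).filter
            (fun c => key c = (i, j, r, s))).card • (X : Polynomial ℤ) ^ (i + j) := by
        rw [hR4]
        rw [Finset.sum_product]
        refine Finset.sum_congr rfl fun i _ => ?_
        rw [Finset.sum_product]
        refine Finset.sum_congr rfl fun j _ => ?_
        rw [Finset.sum_product]
    _ = ∑ i ∈ Finset.range (a + 1), ∑ j ∈ Finset.range (b + 1),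
          C ((a.choose i * b.choose j * (a - i + j).choose j * (b + i - j).choose i : ℕ) : ℤ)
            * X ^ (i + j) := by
        refine Finset.sum_congr rfl fun i hi => Finset.sum_congr rfl fun j hj => ?_
        rw [Finset.mem_range] at hi hj
        have hia : i ≤ a := by omega
        have hjb : j ≤ b := by omega
        have hcard : ∀ r s : ℕ,
            ((Finset.univ.filter (fun c : A ⊕ B → Col => IsGood c)).filter
              (fun c => key c = (i, j, r, s))).card
            = (a.choose i * (i.choose s * (a - i).choose r))
              * (b.choose j * (j.choose r * (b - j).choose s)) := by
          intro r s
          rw [Finset.filter_filter]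
          have e1 : (univ.filter fun c : A ⊕ B → Col => IsGood c ∧ key c = (i, j, r, s))
              = univ.filter (fun c : A ⊕ B → Col =>
                (((univ.filter fun x : A => c (Sum.inl x) = Col.G).card
                    + (univ.filter fun x : A => c (Sum.inl x) = Col.W).card = i) ∧
                  (univ.filter fun x : A => c (Sum.inl x) = Col.G).card = s ∧
                  (univ.filter fun x : A => c (Sum.inl x) = Col.R).card = r) ∧
                (((univ.filter fun y : B => c (Sum.inr y) = Col.G).card
                    + (univ.filter fun y : B => c (Sum.inr y) = Col.W).card = j) ∧
                  (univ.filter fun y : B => c (Sum.inr y) = Col.G).card = r ∧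
                  (univ.filter fun y : B => c (Sum.inr y) = Col.R).card = s)) := by
            apply Finset.filter_congr
            intro c _
            simp only [hkey, IsGood, Prod.mk.injEq]
            constructor
            · rintro ⟨⟨hg1, hg2⟩, hk1, hk2, hk3, hk4⟩
              refine ⟨⟨hk1, hk4, hk3⟩, hk2, ?_, ?_⟩ <;> omega
            · rintro ⟨⟨hk1, hk4, hk3⟩, hk2, hg1, hg2⟩
              refine ⟨⟨?_, ?_⟩, hk1, hk2, hk3, hk4⟩ <;> omega
          rw [e1, count_pair i j r s, hA, hB]
        calc ∑ r ∈ Finset.range (a + 1), ∑ s ∈ Finset.range (a + 1),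
              ((Finset.univ.filter (fun c : A ⊕ B → Col => IsGood c)).filter
                (fun c => key c = (i, j, r, s))).card • (X : Polynomial ℤ) ^ (i + j)
            = ∑ r ∈ Finset.range (a + 1), ∑ s ∈ Finset.range (a + 1),
              ((a.choose i * (i.choose s * (a - i).choose r))
                * (b.choose j * (j.choose r * (b - j).choose s)))
                • (X : Polynomial ℤ) ^ (i + j) := by
              simp only [hcard]
          _ = (∑ r ∈ Finset.range (a + 1), ∑ s ∈ Finset.range (a + 1),
              (a.choose i * (i.choose s * (a - i).choose r))
                * (b.choose j * (j.choose r * (b - j).choose s)))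
                • (X : Polynomial ℤ) ^ (i + j) := by
              simp only [← Finset.sum_smul]
          _ = (a.choose i * b.choose j * (a - i + j).choose j * (b + i - j).choose i)
                • (X : Polynomial ℤ) ^ (i + j) := by
              congr 1
              have hv1 : ∑ r ∈ Finset.range (a + 1), (a - i).choose r * j.choose r
                  = (a - i + j).choose j := by
                rw [vdm_aux (a - i) j a (by omega)]
                have h := Nat.choose_symm (n := a - i + j) (k := j) (by omega)
                rw [show a - i + j - j = a - i from by omega] at h
                exact h
              have hv2 : ∑ s ∈ Finset.range (a + 1), i.choose s * (b - j).choose s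
                  = (b + i - j).choose i := by
                rw [vdm_aux i (b - j) a hia]
                rw [show i + (b - j) = b + i - j from by omega]
              calc ∑ r ∈ Finset.range (a + 1), ∑ s ∈ Finset.range (a + 1),
                    (a.choose i * (i.choose s * (a - i).choose r))
                      * (b.choose j * (j.choose r * (b - j).choose s))
                  = ∑ r ∈ Finset.range (a + 1), ∑ s ∈ Finset.range (a + 1),
                    (a.choose i * b.choose j) * (((a - i).choose r * j.choose r)
                      * (i.choose s * (b - j).choose s)) :=
                    Finset.sum_congr rfl fun r _ => Finset.sum_congr rfl fun s _ => by ring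
                _ = (a.choose i * b.choose j)
                      * ((∑ r ∈ Finset.range (a + 1), (a - i).choose r * j.choose r)
                      * (∑ s ∈ Finset.range (a + 1), i.choose s * (b - j).choose s)) := by
                    rw [Finset.sum_mul_sum]
                    rw [Finset.mul_sum]
                    refine Finset.sum_congr rfl fun r _ => ?_
                    rw [Finset.mul_sum]
                _ = a.choose i * b.choose j * (a - i + j).choose j * (b + i - j).choose i := by
                    rw [hv1, hv2]; ring
          _ = C ((a.choose i * b.choose j * (a - i + j).choose j * (b + i - j).choose i : ℕ) : ℤ)
                * X ^ (i + j) := by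
              rw [nsmul_eq_mul, ← Polynomial.C_eq_natCast]
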